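/- Let q = 2^f with f a positive integer, F_q the finite field with q elements, and Tr : F_q → F_2 the trace map of the extension F_q/F_2. Let a, b ∈ F_q with a ≠ 0 and b ≠ 0. Then {s ∈ F_q : Tr(s·t·(b + a·t)) = 0 for all t ∈ F_q} = {0, a·b⁻²} and {t ∈ F_q : Tr(s·t·(b + a·t)) = 0 for all s ∈ F_q} = {0, b·a⁻¹}. -/

import Mathlib

section Aux
variable (f : ℕ)

local notation "K" => GaloisField 2 f
local notation "Tr" => Algebra.trace (ZMod 2) (GaloisField 2 f)

noncomputable def frobAlgEquiv : K ≃ₐ[ZMod 2] K :=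
  AlgEquiv.ofRingEquiv (f := frobeniusEquiv K 2) (by
    intro r
    rw [frobeniusEquiv_def, ← map_pow]
    congr 1
    exact ZMod.pow_card r)

lemma tr_sq (x : K) : Tr (x ^ 2) = Tr x := by
  have := Algebra.trace_eq_of_algEquiv (frobAlgEquiv f) x
  simpa [frobAlgEquiv, AlgEquiv.ofRingEquiv, frobeniusEquiv_def, frobenius_def] using this

lemma tr_nondegen (x : K) (h : ∀ s : K, Tr (s * x) = 0) : x = 0 := by
  refine (traceForm_nondegenerate (ZMod 2) K).1 x fun y => ?_
  simpa [Algebra.traceForm_apply, mul_comm] using h y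

lemma sq_surj (y : K) : ∃ x : K, x ^ 2 = y :=
  ⟨(frobeniusEquiv K 2).symm y, frobenius_apply_frobeniusEquiv_symm K 2 y⟩

end Aux

/-- Let `q = 2^f` with `f` a positive integer, `F_q = GaloisField 2 f`,
and `Tr : F_q → F_2` the trace map.  Let `a, b ∈ F_q` with `a ≠ 0` and `b ≠ 0`.  Then
`{s : Tr (s·t·(b + a·t)) = 0 for all t} = {0, a·b⁻²}` and
`{t : Tr (s·t·(b + a·t)) = 0 for all s} = {0, b·a⁻¹}`. -/
theorem quadratic_trace_zero_sets_char_two (f : ℕ) (hf : 0 < f)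
    (a b : GaloisField 2 f) (ha : a ≠ 0) (hb : b ≠ 0) :
    ({s : GaloisField 2 f |
        ∀ t : GaloisField 2 f,
          Algebra.trace (ZMod 2) (GaloisField 2 f) (s * t * (b + a * t)) = 0} =
      {0, a * (b ^ 2)⁻¹}) ∧
    ({t : GaloisField 2 f |
        ∀ s : GaloisField 2 f,
          Algebra.trace (ZMod 2) (GaloisField 2 f) (s * t * (b + a * t)) = 0} =
      {0, b * a⁻¹}) := by
  have hb2 : b ^ 2 ≠ 0 := pow_ne_zero _ hb
  constructor
  · ext s
    simp only [Set.mem_setOf_eq, Set.mem_insert_iff, Set.mem_singleton_iff]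
    constructor
    · intro h
      have key : s * a + s ^ 2 * b ^ 2 = 0 := by
        apply tr_nondegen f
        intro u
        obtain ⟨t, rfl⟩ := sq_surj f u
        have h2 : Algebra.trace (ZMod 2) (GaloisField 2 f) ((s * b * t) ^ 2)
            = Algebra.trace (ZMod 2) (GaloisField 2 f) (s * b * t) := tr_sq f _
        have e1 : t ^ 2 * (s * a + s ^ 2 * b ^ 2) = s * a * t ^ 2 + (s * b * t) ^ 2 := by
          ring
        rw [e1, map_add, h2, ← map_add]
        have e2 : s * a * t ^ 2 + s * b * t = s * t * (b + a * t) := by ring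
        rw [e2]
        exact h t
      have key2 : s * (a + s * b ^ 2) = 0 := by linear_combination key
      rcases mul_eq_zero.mp key2 with h0 | h1
      · exact Or.inl h0
      · right
        have hsb : a = s * b ^ 2 := by
          have h2 := CharTwo.add_self_eq_zero (s * b ^ 2)
          linear_combination h1 - h2
        rw [hsb]
        field_simp
    · rintro (rfl | rfl) t
      · simp
      · have e1 : a * (b ^ 2)⁻¹ * t * (b + a * t)
            = (a * (b ^ 2)⁻¹ * b * t) + (a * (b ^ 2)⁻¹ * b * t) ^ 2 := by
          field_simp
        rw [e1, map_add, tr_sq]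
        exact CharTwo.add_self_eq_zero _
  · ext t
    simp only [Set.mem_setOf_eq, Set.mem_insert_iff, Set.mem_singleton_iff]
    constructor
    · intro h
      have key : t * (b + a * t) = 0 := by
        apply tr_nondegen f
        intro s
        rw [← mul_assoc]; exact h s
      rcases mul_eq_zero.mp key with h0 | h1
      · exact Or.inl h0
      · right
        have hba : b = a * t := by
          have h2 := CharTwo.add_self_eq_zero (a * t)
          linear_combination h1 - h2
        rw [hba]
        field_simp
    · rintro (rfl | rfl) s
      · simp
      · have e0 : b + a * (b * a⁻¹) = 0 := by
          have : a * (b * a⁻¹) = b := by field_simp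
          rw [this]
          exact CharTwo.add_self_eq_zero _
        rw [e0, mul_zero, map_zero]
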